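/- For a right spherical triangle with legs \(a,b\), hypotenuse \(c\), and angles \(A,B\) opposite the legs (right angle at \(C\)), the partial derivatives of the side lengths with respect to the angles satisfy \(\partial a/\partial A = 1/\sin b\), \(\partial b/\partial A = \cos a \cos b/\sin a\), \(\partial a/\partial B = \cos a\cos b/\sin b\), and \(\partial b/\partial B = 1/\sin a\). -/

import Mathlib

open Real Set

private lemma sqrt_fact (P Q : ℝ) (hP : P ∈ Ioo 0 (π / 2)) (hQ : Q ∈ Ioo 0 (π / 2))
    (hR : cos P ^ 2 + cos Q ^ 2 < 1) :
    Real.sqrt (1 - (cos P / sin Q) ^ 2) =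
      Real.sqrt (1 - cos P ^ 2 - cos Q ^ 2) / sin Q := by
  have hsQ : 0 < sin Q := Real.sin_pos_of_pos_of_lt_pi hQ.1 (by linarith [hQ.2, Real.pi_pos])
  have h1 : 1 - (cos P / sin Q) ^ 2 = (1 - cos P ^ 2 - cos Q ^ 2) / sin Q ^ 2 := by
    have := Real.sin_sq_add_cos_sq Q
    field_simp
    nlinarith [this]
  rw [h1, Real.sqrt_div (by nlinarith) _, Real.sqrt_sq hsQ.le]

private lemma unit_fact (P Q : ℝ) (hP : P ∈ Ioo 0 (π / 2)) (hQ : Q ∈ Ioo 0 (π / 2))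
    (hR : cos P ^ 2 + cos Q ^ 2 < 1) :
    0 < cos P / sin Q ∧ cos P / sin Q < 1 := by
  have hsQ : 0 < sin Q := Real.sin_pos_of_pos_of_lt_pi hQ.1 (by linarith [hQ.2, Real.pi_pos])
  have hcP : 0 < cos P := Real.cos_pos_of_mem_Ioo ⟨by linarith [hP.1, Real.pi_pos], hP.2⟩
  have hlt : cos P < sin Q := by nlinarith [Real.sin_sq_add_cos_sq Q]
  exact ⟨div_pos hcP hsQ, (div_lt_one hsQ).2 hlt⟩

/-- Helper: derivative of `x ↦ arccos (cos x / sin Q)` at `P`. -/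
private lemma helper1 (P Q : ℝ) (hP : P ∈ Ioo 0 (π / 2)) (hQ : Q ∈ Ioo 0 (π / 2))
    (hR : cos P ^ 2 + cos Q ^ 2 < 1) :
    HasDerivAt (fun x => Real.arccos (cos x / sin Q))
      (sin P / Real.sqrt (1 - cos P ^ 2 - cos Q ^ 2)) P := by
  obtain ⟨hu0, hu1⟩ := unit_fact P Q hP hQ hR
  have hsP : 0 < sin P := Real.sin_pos_of_pos_of_lt_pi hP.1 (by linarith [hP.2, Real.pi_pos])
  have hsQ : 0 < sin Q := Real.sin_pos_of_pos_of_lt_pi hQ.1 (by linarith [hQ.2, Real.pi_pos])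
  have hD : 0 < Real.sqrt (1 - cos P ^ 2 - cos Q ^ 2) := Real.sqrt_pos.2 (by linarith)
  have hinner : HasDerivAt (fun x => cos x / sin Q) (-sin P / sin Q) P :=
    (Real.hasDerivAt_cos P).div_const (sin Q)
  have h := (Real.hasDerivAt_arccos (x := cos P / sin Q) (by linarith) (by linarith)).comp P hinner
  refine h.congr_deriv ?_
  rw [sqrt_fact P Q hP hQ hR]
  field_simp

/-- Helper: derivative of `x ↦ arccos (cos Q / sin x)` at `P`. -/
private lemma helper2 (P Q : ℝ) (hP : P ∈ Ioo 0 (π / 2)) (hQ : Q ∈ Ioo 0 (π / 2))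
    (hR : cos P ^ 2 + cos Q ^ 2 < 1) :
    HasDerivAt (fun x => Real.arccos (cos Q / sin x))
      (cos P * cos Q / (sin P * Real.sqrt (1 - cos P ^ 2 - cos Q ^ 2))) P := by
  have hR' : cos Q ^ 2 + cos P ^ 2 < 1 := by linarith
  obtain ⟨hu0, hu1⟩ := unit_fact Q P hQ hP hR'
  have hsP : 0 < sin P := Real.sin_pos_of_pos_of_lt_pi hP.1 (by linarith [hP.2, Real.pi_pos])
  have hD : 0 < Real.sqrt (1 - cos P ^ 2 - cos Q ^ 2) := Real.sqrt_pos.2 (by linarith)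
  have hinner : HasDerivAt (fun x => cos Q / sin x)
      ((0 * sin P - cos Q * cos P) / sin P ^ 2) P :=
    (hasDerivAt_const P (cos Q)).div (Real.hasDerivAt_sin P) hsP.ne'
  have h := (Real.hasDerivAt_arccos (x := cos Q / sin P) (by linarith) (by linarith)).comp P hinner
  refine h.congr_deriv ?_
  have hs : Real.sqrt (1 - (cos Q / sin P) ^ 2)
      = Real.sqrt (1 - cos P ^ 2 - cos Q ^ 2) / sin P := by
    rw [sqrt_fact Q P hQ hP hR']; ring_nf
  rw [hs]
  field_simp
  ring

/-- For a right spherical triangle with right angle at `C`, determined by its angles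
`A, B`, the legs `a = arccos(cos A / sin B)` and `b = arccos(cos B / sin A)` (Napier's
rules) satisfy `∂a/∂A = 1/sin b`, `∂b/∂A = cos a cos b / sin a`,
`∂a/∂B = cos a cos b / sin b`, `∂b/∂B = 1/sin a`. -/
theorem partials_of_sides (A B : ℝ)
    (hA : A ∈ Ioo 0 (π / 2)) (hB : B ∈ Ioo 0 (π / 2))
    (hR : cos A ^ 2 + cos B ^ 2 < 1) :
    (let a := Real.arccos (cos A / sin B); let b := Real.arccos (cos B / sin A);
    HasDerivAt (fun x => Real.arccos (cos x / sin B)) (1 / sin b) A ∧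
    HasDerivAt (fun x => Real.arccos (cos B / sin x)) (cos a * cos b / sin a) A ∧
    HasDerivAt (fun y => Real.arccos (cos A / sin y)) (cos a * cos b / sin b) B ∧
    HasDerivAt (fun y => Real.arccos (cos y / sin A)) (1 / sin a) B) := by
  intro a b
  have hR' : cos B ^ 2 + cos A ^ 2 < 1 := by linarith
  have hsA : 0 < sin A := Real.sin_pos_of_pos_of_lt_pi hA.1 (by linarith [hA.2, Real.pi_pos])
  have hsB : 0 < sin B := Real.sin_pos_of_pos_of_lt_pi hB.1 (by linarith [hB.2, Real.pi_pos])
  have hD : 0 < Real.sqrt (1 - cos A ^ 2 - cos B ^ 2) := Real.sqrt_pos.2 (by linarith)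
  obtain ⟨ha0, ha1⟩ := unit_fact A B hA hB hR
  obtain ⟨hb0, hb1⟩ := unit_fact B A hB hA hR'
  have hca : Real.cos a = cos A / sin B := Real.cos_arccos (by linarith) (by linarith)
  have hcb : Real.cos b = cos B / sin A := Real.cos_arccos (by linarith) (by linarith)
  have hsa : Real.sin a = Real.sqrt (1 - cos A ^ 2 - cos B ^ 2) / sin B := by
    rw [show a = Real.arccos (cos A / sin B) from rfl, Real.sin_arccos,
      sqrt_fact A B hA hB hR]
  have hsb : Real.sin b = Real.sqrt (1 - cos A ^ 2 - cos B ^ 2) / sin A := by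
    rw [show b = Real.arccos (cos B / sin A) from rfl, Real.sin_arccos,
      sqrt_fact B A hB hA hR']
    ring_nf
  refine ⟨?_, ?_, ?_, ?_⟩
  · have h := helper1 A B hA hB hR
    convert h using 1
    rw [hsb]; field_simp
  · have h := helper2 A B hA hB hR
    convert h using 1
    rw [hca, hcb, hsa]; field_simp
  · have h := helper2 B A hB hA hR'
    convert h using 1
    rw [hca, hcb, hsb]
    have : Real.sqrt (1 - cos B ^ 2 - cos A ^ 2) = Real.sqrt (1 - cos A ^ 2 - cos B ^ 2) := by
      ring_nf
    rw [this]; field_simp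
  · have h := helper1 B A hB hA hR'
    convert h using 1
    rw [hsa]
    have : Real.sqrt (1 - cos B ^ 2 - cos A ^ 2) = Real.sqrt (1 - cos A ^ 2 - cos B ^ 2) := by
      ring_nf
    rw [this]; field_simp
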